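/- Let f, g : [-1,1] → [-1,1] be continuous maps with f(0) = g(0) = 0, and let x₁, x₂ satisfy -1 ≤ x₁ < 0 < x₂ ≤ 1. Then ⟨x₁,x₂⟩ is a negative radial departure of f ∘ g if and only if either (1) ⟨x₁,x₂⟩ is a positive radial departure of g and ⟨g(x₁),g(x₂)⟩ is a negative radial departure of f, or (2) ⟨x₁,x₂⟩ is a negative radial departure of g and ⟨g(x₂),g(x₁)⟩ is a positive radial departure of f. -/
import Mathlib


open Set

/-- A positive radial departure of `f`. -/
def PosRD (f : ℝ → ℝ) (x₁ x₂ : ℝ) : Prop :=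
  -1 ≤ x₁ ∧ x₁ < 0 ∧ 0 < x₂ ∧ x₂ ≤ 1 ∧ f '' Ioo x₁ x₂ = Ioo (f x₁) (f x₂)

/-- A negative radial departure of `f`. -/
def NegRD (f : ℝ → ℝ) (x₁ x₂ : ℝ) : Prop :=
  -1 ≤ x₁ ∧ x₁ < 0 ∧ 0 < x₂ ∧ x₂ ≤ 1 ∧ f '' Ioo x₁ x₂ = Ioo (f x₂) (f x₁)

/-- A radial departure of `f` (of either orientation). -/
def RadialDeparture (f : ℝ → ℝ) (x₁ x₂ : ℝ) : Prop := PosRD f x₁ x₂ ∨ NegRD f x₁ x₂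

/-- A (right) departure of `g` (viewed as a map on `[0,1]`). -/
def Departure (g : ℝ → ℝ) (x : ℝ) : Prop := 0 < x ∧ x ≤ 1 ∧ g x ∉ g '' Ico 0 x

/-- A left departure of `g` (viewed as a map on `[-1,0]`). -/
def LeftDeparture (g : ℝ → ℝ) (x : ℝ) : Prop := -1 ≤ x ∧ x < 0 ∧ g x ∉ g '' Ioc x 0

/-- A (right) contour point of `g`: a departure `α` such that every departure past `α`
is preceded (within `(α, x]`) by a departure of orientation opposite to that of `α`. -/
def ContourPoint (g : ℝ → ℝ) (α : ℝ) : Prop :=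
  Departure g α ∧
    ∀ x, Departure g x → α < x → ∃ y, Departure g y ∧ α < y ∧ y ≤ x ∧ g α * g y < 0

/-- `[ym, yp]` is a liftable range for `t`. -/
def LiftableRange (t : ℝ → ℝ) (ym yp : ℝ) : Prop :=
  -1 ≤ ym ∧ ym ≤ 0 ∧ 0 ≤ yp ∧ yp ≤ 1 ∧
  t '' Icc ym 0 ⊆ t '' Icc 0 1 ∧
  ¬ ∃ y₁ y₂, RadialDeparture t y₁ y₂ ∧ ym ≤ y₁ ∧ yp < y₂

/-- `f` is linear (affine) on the interval `[a,b]`. -/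
def LinearOn (f : ℝ → ℝ) (a b : ℝ) : Prop :=
  ∀ x ∈ Icc a b, (b - a) * f x = (b - x) * f a + (x - a) * f b

/-- `f` is piecewise-linear on `[-1,1]`. -/
def PiecewiseLinear (f : ℝ → ℝ) : Prop :=
  ∃ n : ℕ, ∃ c : ℕ → ℝ, c 0 = -1 ∧ c n = 1 ∧ (∀ i < n, c i < c (i + 1)) ∧
    ∀ i < n, LinearOn f (c i) (c (i + 1))

/-- `t` is the contour factor of `g` (for maps on `[0,1]`): the contour points of `g`
are `0 = α₀ < α₁ < ⋯ < α_n`, `t (i/n) = g (α i)`, and `t` is linear in between. -/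
def IsContourFactor (g t : ℝ → ℝ) : Prop :=
  ∃ n : ℕ, 0 < n ∧ ∃ α : ℕ → ℝ, α 0 = 0 ∧ (∀ i < n, α i < α (i + 1)) ∧
    (∀ x, ContourPoint g x ↔ ∃ i, 1 ≤ i ∧ i ≤ n ∧ x = α i) ∧
    (∀ i ≤ n, t ((i : ℝ) / (n : ℝ)) = g (α i)) ∧
    (∀ i < n, LinearOn t ((i : ℝ) / (n : ℝ)) (((i : ℝ) + 1) / (n : ℝ)))

/-- `t` is the radial contour factor of `f`: its restriction to `[0,1]` is the contour
factor of `f|[0,1]`, and `t|[-1,0] ∘ r` is the contour factor of `f|[-1,0] ∘ r`,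
where `r x = -x`. -/
def IsRadialContourFactor (f t : ℝ → ℝ) : Prop :=
  IsContourFactor f t ∧ IsContourFactor (fun x => f (-x)) (fun x => t (-x))

/-- `f` is non-constant on each of `[0,1]` and `[-1,0]`. -/
def NonConstSides (f : ℝ → ℝ) : Prop :=
  (∃ a ∈ Icc (0:ℝ) 1, ∃ b ∈ Icc (0:ℝ) 1, f a ≠ f b) ∧
  (∃ a ∈ Icc (-1:ℝ) 0, ∃ b ∈ Icc (-1:ℝ) 0, f a ≠ f b)

theorem stmt3 (f g : ℝ → ℝ) (hf : Continuous f) (hg : Continuous g)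
    (hfmap : MapsTo f (Icc (-1:ℝ) 1) (Icc (-1:ℝ) 1))
    (hgmap : MapsTo g (Icc (-1:ℝ) 1) (Icc (-1:ℝ) 1))
    (hf0 : f 0 = 0) (hg0 : g 0 = 0)
    (x₁ x₂ : ℝ) (h1 : -1 ≤ x₁) (h2 : x₁ < 0) (h3 : 0 < x₂) (h4 : x₂ ≤ 1) :
    NegRD (f ∘ g) x₁ x₂ ↔
      (PosRD g x₁ x₂ ∧ NegRD f (g x₁) (g x₂)) ∨
      (NegRD g x₁ x₂ ∧ PosRD f (g x₂) (g x₁)) := by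
  constructor
  · rintro ⟨-, -, -, -, himg⟩
    set J := g '' Ioo x₁ x₂ with hJdef
    have h0mem : (0:ℝ) ∈ Ioo x₁ x₂ := ⟨h2, h3⟩
    have hJ0 : (0:ℝ) ∈ J := ⟨0, h0mem, hg0⟩
    have hJne : J.Nonempty := ⟨0, hJ0⟩
    have hfJ : f '' J = Ioo (f (g x₂)) (f (g x₁)) := by
      rw [hJdef, ← image_comp]; exact himg
    have h0f : (0:ℝ) ∈ Ioo (f (g x₂)) (f (g x₁)) := by
      rw [← hfJ]; exact ⟨0, hJ0, hf0⟩
    have hne : g x₁ ≠ g x₂ := by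
      intro h
      rw [h] at h0f
      exact absurd (h0f.1.trans h0f.2) (lt_irrefl _)
    have hgx1J : g x₁ ∉ J := by
      intro h
      have : f (g x₁) ∈ f '' J := mem_image_of_mem f h
      rw [hfJ] at this
      exact absurd this.2 (lt_irrefl _)
    have hgx2J : g x₂ ∉ J := by
      intro h
      have : f (g x₂) ∈ f '' J := mem_image_of_mem f h
      rw [hfJ] at this
      exact absurd this.1 (lt_irrefl _)
    have hclIoo : closure (Ioo x₁ x₂) = Icc x₁ x₂ := closure_Ioo (h2.trans h3).ne
    have hclJ : g '' Icc x₁ x₂ ⊆ closure J := by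
      rw [← hclIoo]
      exact image_closure_subset_closure_image hg
    have hgx1cl : g x₁ ∈ closure J :=
      hclJ (mem_image_of_mem g ⟨le_refl _, (h2.trans h3).le⟩)
    have hgx2cl : g x₂ ∈ closure J :=
      hclJ (mem_image_of_mem g ⟨(h2.trans h3).le, le_refl _⟩)
    have hJord : OrdConnected J :=
      ((isPreconnected_Ioo).image g hg.continuousOn).ordConnected
    have hJsub : J ⊆ Icc (-1:ℝ) 1 := by
      rintro y ⟨x, hx, rfl⟩
      exact hgmap ⟨h1.trans hx.1.le, hx.2.le.trans h4⟩
    have hbdd1 : BddBelow J := ⟨-1, fun y hy => (hJsub hy).1⟩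
    have hbdd2 : BddAbove J := ⟨1, fun y hy => (hJsub hy).2⟩
    have hclsub : closure J ⊆ Icc (sInf J) (sSup J) :=
      closure_minimal (fun y hy => ⟨csInf_le hbdd1 hy, le_csSup hbdd2 hy⟩) isClosed_Icc
    have hkey : ∀ y ∈ closure J, y ∉ J → y = sInf J ∨ y = sSup J := by
      intro y hy hyJ
      by_contra hcon
      push_neg at hcon
      have hy' := hclsub hy
      have hlt1 : sInf J < y := lt_of_le_of_ne hy'.1 (Ne.symm hcon.1)
      have hlt2 : y < sSup J := lt_of_le_of_ne hy'.2 hcon.2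
      obtain ⟨a, haJ, ha⟩ := exists_lt_of_csInf_lt hJne hlt1
      obtain ⟨b, hbJ, hb⟩ := exists_lt_of_lt_csSup hJne hlt2
      exact hyJ (hJord.out haJ hbJ ⟨ha.le, hb.le⟩)
    have hIoo_eq : ∀ u v : ℝ, u = sInf J → v = sSup J → u ∉ J → v ∉ J → J = Ioo u v := by
      intro u v hu hv huJ hvJ
      subst hu; subst hv
      ext y
      constructor
      · intro hy
        refine ⟨lt_of_le_of_ne (csInf_le hbdd1 hy) ?_, lt_of_le_of_ne (le_csSup hbdd2 hy) ?_⟩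
        · intro h; rw [← h] at hy; exact huJ hy
        · intro h; rw [h] at hy; exact hvJ hy
      · intro hy
        obtain ⟨a, haJ, ha⟩ := exists_lt_of_csInf_lt hJne hy.1
        obtain ⟨b, hbJ, hb⟩ := exists_lt_of_lt_csSup hJne hy.2
        exact hJord.out haJ hbJ ⟨ha.le, hb.le⟩
    have hx1c := hkey _ hgx1cl hgx1J
    have hx2c := hkey _ hgx2cl hgx2J
    have hgx1b : g x₁ ∈ Icc (-1:ℝ) 1 := hgmap ⟨h1, h2.le.trans (by norm_num)⟩
    have hgx2b : g x₂ ∈ Icc (-1:ℝ) 1 := hgmap ⟨(by norm_num : (-1:ℝ) ≤ 0).trans h3.le, h4⟩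
    rcases hx1c with hA | hA <;> rcases hx2c with hB | hB
    · exact absurd (hA.trans hB.symm) hne
    · -- g x₁ = sInf J, g x₂ = sSup J : PosRD g, NegRD f
      have hJeq : J = Ioo (g x₁) (g x₂) := hIoo_eq (g x₁) (g x₂) hA hB hgx1J hgx2J
      have h0' : (0:ℝ) ∈ Ioo (g x₁) (g x₂) := hJeq ▸ hJ0
      left
      refine ⟨⟨h1, h2, h3, h4, hJeq⟩, hgx1b.1, h0'.1, h0'.2, hgx2b.2, ?_⟩
      rw [← hJeq]; exact hfJ
    · -- g x₁ = sSup J, g x₂ = sInf J : NegRD g, PosRD f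
      have hJeq : J = Ioo (g x₂) (g x₁) := hIoo_eq (g x₂) (g x₁) hB hA hgx2J hgx1J
      have h0' : (0:ℝ) ∈ Ioo (g x₂) (g x₁) := hJeq ▸ hJ0
      right
      refine ⟨⟨h1, h2, h3, h4, hJeq⟩, hgx2b.1, h0'.1, h0'.2, hgx1b.2, ?_⟩
      rw [← hJeq]; exact hfJ
    · exact absurd (hA.trans hB.symm) hne
  · rintro (⟨⟨-, -, -, -, hgimg⟩, ⟨-, -, -, -, hfimg⟩⟩ | ⟨⟨-, -, -, -, hgimg⟩, ⟨-, -, -, -, hfimg⟩⟩) <;>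
      exact ⟨h1, h2, h3, h4, by rw [image_comp, hgimg, hfimg]; rfl⟩
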